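/- Suppose all X_i, i ∈ V, take values in a common measurable space and the joint distribution of (X_i)_{i∈V} is exchangeable, i.e., invariant under every permutation of the coordinates. Then P satisfies the composition property (for all distinct i, j, k ∈ V and C ⊆ V∖{i,j,k}, {i} ⫫ {j} | C and {i} ⫫ {k} | C imply {i} ⫫ {j,k} | C) if and only if P satisfies upward stability (for all distinct i, j, k ∈ V and C ⊆ V∖{i,j,k}, {i} ⫫ {j} | C implies {i} ⫫ {j} | C∪{k}). -/

import Mathlib

open MeasureTheory ProbabilityTheory

/-- A directed acyclic graph on vertex set `V`: a directed edge relation with no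
directed cycles (a directed path from a node to itself). -/
structure DAG (V : Type*) where
  Edge : V → V → Prop
  acyclic : ∀ i, ¬ Relation.TransGen Edge i i

namespace DAG

variable {V : Type*}

/-- `i` and `j` are adjacent if there is a directed edge between them in either direction. -/
def Adj (G : DAG V) (i j : V) : Prop := G.Edge i j ∨ G.Edge j i

/-- `an_G(C)`: the set of nodes not in `C` with a directed path to some node of `C`. -/
def ancestors (G : DAG V) (C : Set V) : Set V :=
  {i | i ∉ C ∧ ∃ j ∈ C, Relation.TransGen G.Edge i j}

/-- A path between `a` and `b` in (the skeleton of) a DAG `G`: a sequence of at least two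
distinct vertices starting at `a`, ending at `b`, with consecutive vertices adjacent. -/
structure Path (G : DAG V) (a b : V) where
  n : ℕ
  npos : 0 < n
  f : Fin (n + 1) → V
  first : f 0 = a
  last : f (Fin.last n) = b
  adj : ∀ i : Fin n, G.Adj (f i.castSucc) (f i.succ)
  inj : Function.Injective f

/-- The intermediate node at position `t` of the path is a collider on the path:
both incident edges of the path point into it. -/
def Path.ColliderAt {G : DAG V} {a b : V} (π : Path G a b) (t : ℕ)
    (h1 : 0 < t) (h2 : t < π.n) : Prop :=
  G.Edge (π.f ⟨t - 1, by omega⟩) (π.f ⟨t, by omega⟩) ∧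
  G.Edge (π.f ⟨t + 1, by omega⟩) (π.f ⟨t, by omega⟩)

/-- A path is blocked by `C` if some intermediate non-collider on the path lies in `C`,
or some collider `m` on the path satisfies `m ∉ C ∪ an_G(C)`. -/
def Path.Blocked {G : DAG V} {a b : V} (π : Path G a b) (C : Set V) : Prop :=
  ∃ (t : ℕ) (h1 : 0 < t) (h2 : t < π.n),
    (¬ π.ColliderAt t h1 h2 ∧ π.f ⟨t, by omega⟩ ∈ C) ∨
    (π.ColliderAt t h1 h2 ∧ π.f ⟨t, by omega⟩ ∉ C ∪ G.ancestors C)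

/-- d-separation: every path between a node of `A` and a node of `B` is blocked by `C`. -/
def dSep (G : DAG V) (A B C : Set V) : Prop :=
  ∀ a ∈ A, ∀ b ∈ B, ∀ π : Path G a b, π.Blocked C

/-- Two DAGs are Markov equivalent if they have exactly the same d-separations. -/
def MarkovEquiv (G₁ G₂ : DAG V) : Prop :=
  ∀ A B C : Set V, Disjoint A B → Disjoint A C → Disjoint B C →
    (G₁.dSep A B C ↔ G₂.dSep A B C)

/-- A v-configuration `i ∼ k ∼ j` in the DAG: `i, k, j` distinct, `i` and `j` each
adjacent to `k`, but `i` and `j` not adjacent. -/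
def VConfig (G : DAG V) (i k j : V) : Prop :=
  i ≠ j ∧ i ≠ k ∧ j ≠ k ∧ G.Adj i k ∧ G.Adj j k ∧ ¬ G.Adj i j

/-- A collider v-configuration `i → k ← j`. -/
def IsCollider (G : DAG V) (i k j : V) : Prop :=
  G.VConfig i k j ∧ G.Edge i k ∧ G.Edge j k

/-- A non-collider v-configuration. -/
def IsNonCollider (G : DAG V) (i k j : V) : Prop :=
  G.VConfig i k j ∧ ¬ (G.Edge i k ∧ G.Edge j k)

end DAG

/-- A v-configuration `i ∼ k ∼ j` in an undirected graph given by an adjacency relation. -/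
def VConfigRel {V : Type*} (A : V → V → Prop) (i k j : V) : Prop :=
  i ≠ j ∧ i ≠ k ∧ j ≠ k ∧ A i k ∧ A j k ∧ ¬ A i j

section Prob

variable {V : Type*} {Ω : Type*} [MeasurableSpace Ω] [StandardBorelSpace Ω] [Nonempty Ω]
  {E : V → Type*} [∀ i, MeasurableSpace (E i)]

/-- `A ⫫ B | C`: the families `(X i)_{i ∈ A}` and `(X j)_{j ∈ B}` are conditionally
independent given the σ-algebra generated by `(X k)_{k ∈ C}`, under `μ`. -/
def CI (μ : Measure Ω) [IsFiniteMeasure μ] (X : ∀ i, Ω → E i)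
    (hX : ∀ i, Measurable (X i)) (A B C : Set V) : Prop :=
  CondIndepFun (MeasurableSpace.comap (fun ω => fun k : C => X k.1 ω) inferInstance)
    ((measurable_pi_iff.mpr fun k : C => hX k.1).comap_le)
    (fun ω => fun i : A => X i.1 ω) (fun ω => fun j : B => X j.1 ω) μ

variable (μ : Measure Ω) [IsFiniteMeasure μ] (X : ∀ i, Ω → E i) (hX : ∀ i, Measurable (X i))

/-- The skeleton of `P`: distinct `i, j` are adjacent iff no `C ⊆ V \ {i,j}` renders
`{i} ⫫ {j} | C`. -/
def SkP (i j : V) : Prop :=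
  i ≠ j ∧ ¬ ∃ C : Set V, C ⊆ ({i, j} : Set V)ᶜ ∧ CI μ X hX {i} {j} C

/-- `P` is Markovian to `G`: every d-separation implies the corresponding
conditional independence. -/
def MarkovTo (G : DAG V) : Prop :=
  ∀ A B C : Set V, Disjoint A B → Disjoint A C → Disjoint B C →
    G.dSep A B C → CI μ X hX A B C

/-- Adjacency faithfulness: adjacent nodes of `G` are separated by no conditioning set. -/
def AdjFaithful (G : DAG V) : Prop :=
  ∀ i j : V, G.Adj i j → ¬ ∃ C : Set V, C ⊆ ({i, j} : Set V)ᶜ ∧ CI μ X hX {i} {j} C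

/-- `sk(P) = sk(G)`. -/
def SkelEq (G : DAG V) : Prop :=
  ∀ i j : V, G.Adj i j ↔ SkP μ X hX i j

/-- V-ordered upward stability wrt `G`. -/
def VOUS (G : DAG V) : Prop :=
  ∀ i k j : V, G.IsNonCollider i k j → ∀ C : Set V, C ⊆ ({i, j, k} : Set V)ᶜ →
    CI μ X hX {i} {j} C → CI μ X hX {i} {j} (C ∪ {k})

/-- Collider-stability wrt `G`. -/
def ColliderStable (G : DAG V) : Prop :=
  ∀ i k j : V, G.IsCollider i k j →
    ∃ C : Set V, C ⊆ ({i, j, k} : Set V)ᶜ ∧ CI μ X hX {i} {j} C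

/-- V-stability of `P`. -/
def VStable : Prop :=
  ∀ i k j : V, VConfigRel (SkP μ X hX) i k j → ∀ C : Set V, C ⊆ ({i, j, k} : Set V)ᶜ →
    ¬ (CI μ X hX {i} {j} C ∧ CI μ X hX {i} {j} (C ∪ {k}))

/-- The orientation rule assigns the v-configuration `i ∼ k ∼ j` of `sk(P)` to be a
collider. -/
def AssignedCollider (i k j : V) : Prop :=
  VConfigRel (SkP μ X hX) i k j ∧
  ∃ C : Set V, C ⊆ ({i, j, k} : Set V)ᶜ ∧
    CI μ X hX {i} {j} C ∧ ¬ CI μ X hX {i} {j} (C ∪ {k})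

/-- The orientation rule assigns the v-configuration `i ∼ k ∼ j` of `sk(P)` to be a
non-collider. -/
def AssignedNonCollider (i k j : V) : Prop :=
  VConfigRel (SkP μ X hX) i k j ∧
  ∀ C : Set V, C ⊆ ({i, j} : Set V)ᶜ → CI μ X hX {i} {j} C → k ∈ C

/-- A DAG `G` satisfies the V-OUS and collider-stable orientation rule wrt `P`. -/
def SatisfiesRule (G : DAG V) : Prop :=
  SkelEq μ X hX G ∧
  (∀ i k j : V, AssignedCollider μ X hX i k j → G.IsCollider i k j) ∧
  (∀ i k j : V, AssignedNonCollider μ X hX i k j → G.IsNonCollider i k j)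

/-- Modified V-stability: any two DAGs `G` with `sk(G) = sk(P)` to which `P` is V-OUS and
collider-stable are Markov equivalent. -/
def ModifiedVStable : Prop :=
  ∀ G₁ G₂ : DAG V,
    SkelEq μ X hX G₁ → VOUS μ X hX G₁ → ColliderStable μ X hX G₁ →
    SkelEq μ X hX G₂ → VOUS μ X hX G₂ → ColliderStable μ X hX G₂ →
    DAG.MarkovEquiv G₁ G₂

/-- Ordered upward stability wrt `G`. -/
def OUS (G : DAG V) : Prop :=
  ∀ i j k : V, i ≠ j → i ≠ k → j ≠ k → k ∈ G.ancestors {i, j} →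
    ∀ C : Set V, C ⊆ ({i, j, k} : Set V)ᶜ →
      CI μ X hX {i} {j} C → CI μ X hX {i} {j} (C ∪ {k})

/-- Ordered downward stability wrt `G`. -/
def ODS (G : DAG V) : Prop :=
  ∀ i j k : V, i ≠ j → i ≠ k → j ≠ k →
    ∀ C : Set V, C ⊆ ({i, j, k} : Set V)ᶜ → k ∉ G.ancestors ({i, j} ∪ C) →
      CI μ X hX {i} {j} (C ∪ {k}) → CI μ X hX {i} {j} C

end Prob

set_option linter.unusedSectionVars false

namespace StmtAux

section Abstract


variable {Ω : Type*} {mc ma mb md : MeasurableSpace Ω} [mΩ : MeasurableSpace Ω]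
  {μ : Measure Ω} [IsFiniteMeasure μ]

/-- Abstract conditional independence of σ-algebras via conditional expectations. -/
def CIA (μ : Measure Ω) [IsFiniteMeasure μ] (mc ma mb : MeasurableSpace Ω) : Prop :=
  ∀ s t : Set Ω, MeasurableSet[ma] s → MeasurableSet[mb] t →
    (μ⟦s ∩ t | mc⟧) =ᵐ[μ] (μ⟦s | mc⟧) * (μ⟦t | mc⟧)

lemma CIA.symm (h : CIA μ mc ma mb) : CIA μ mc mb ma := by
  intro s t hs ht
  have := h t s ht hs
  rw [Set.inter_comm] at this
  simpa [mul_comm] using this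

lemma CIA.mono_right (h : CIA μ mc ma mb) (hb : md ≤ mb) :
    CIA μ mc ma md := fun s t hs ht => h s t hs (hb _ ht)

lemma intInd {s : Set Ω} (hs : MeasurableSet s) :
    Integrable (s.indicator fun _ => (1 : ℝ)) μ :=
  (integrable_const 1).indicator hs

lemma cia_iff_condexp (hmc : mc ≤ mΩ) (hma : ma ≤ mΩ) (hmb : mb ≤ mΩ) :
    CIA μ mc ma mb ↔ ∀ s : Set Ω, MeasurableSet[ma] s →
      (μ⟦s | mc ⊔ mb⟧) =ᵐ[μ] μ⟦s | mc⟧ := by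
  have hsuple : mc ⊔ mb ≤ mΩ := sup_le hmc hmb
  haveI : SigmaFinite (μ.trim hsuple) := (isFiniteMeasure_trim hsuple).toSigmaFinite
  haveI : SigmaFinite (μ.trim hmc) := (isFiniteMeasure_trim hmc).toSigmaFinite
  constructor
  · intro h s hs
    have hsM : MeasurableSet s := hma _ hs
    set g : Ω → ℝ := μ⟦s | mc⟧ with hg
    have hgm : AEStronglyMeasurable[mc ⊔ mb] g μ := by
      refine StronglyMeasurable.aestronglyMeasurable ?_
      exact StronglyMeasurable.mono (stronglyMeasurable_condExp) le_sup_left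
    have hgint : ∀ A : Set Ω, MeasurableSet[mc ⊔ mb] A → μ A < ⊤ → IntegrableOn g A μ := by
      intro A _ _
      exact Integrable.integrableOn (integrable_condExp)
    refine ((ae_eq_condExp_of_forall_setIntegral_eq hsuple (intInd hsM) hgint ?_ hgm).symm)
    suffices H : ∀ A : Set Ω, MeasurableSet[mc ⊔ mb] A →
        ∫ x in A, g x ∂μ = ∫ x in A, (s.indicator fun _ => (1:ℝ)) x ∂μ by
      exact fun A hA _ => H A hA
    set P : Set (Set Ω) := {u | ∃ c b, MeasurableSet[mc] c ∧ MeasurableSet[mb] b ∧ u = c ∩ b}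
      with hP
    have h_eq : (mc ⊔ mb) = MeasurableSpace.generateFrom P := by
      refine le_antisymm (sup_le ?_ ?_) (MeasurableSpace.generateFrom_le ?_)
      · intro c hc
        exact MeasurableSpace.measurableSet_generateFrom ⟨c, Set.univ, hc, MeasurableSet.univ,
          (Set.inter_univ c).symm⟩
      · intro b hb
        exact MeasurableSpace.measurableSet_generateFrom ⟨Set.univ, b, MeasurableSet.univ, hb,
          (Set.univ_inter b).symm⟩
      · rintro u ⟨c, b, hc, hb, rfl⟩
        exact ((le_sup_left : mc ≤ mc ⊔ mb) _ hc).inter ((le_sup_right : mb ≤ mc ⊔ mb) _ hb)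
    have h_inter : IsPiSystem P := by
      rintro u ⟨c, b, hc, hb, rfl⟩ u' ⟨c', b', hc', hb', rfl⟩ _
      exact ⟨c ∩ c', b ∩ b', hc.inter hc', hb.inter hb', by
        rw [Set.inter_inter_inter_comm]⟩
    intro A hA
    refine @MeasurableSpace.induction_on_inter Ω (mc ⊔ mb)
      (fun A _ => ∫ x in A, g x ∂μ = ∫ x in A, (s.indicator fun _ => (1:ℝ)) x ∂μ) P
      h_eq h_inter ?_ ?_ ?_ ?_ A hA
    · simp
    · rintro u ⟨c, b, hc, hb, rfl⟩
      have hcM : MeasurableSet c := hmc _ hc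
      have hbM : MeasurableSet b := hmb _ hb
      rw [← setIntegral_indicator hbM, ← setIntegral_indicator hbM]
      have h1 : Integrable (b.indicator g) μ := integrable_condExp.indicator hbM
      rw [← setIntegral_condExp hmc h1 hc]
      have h2 : μ[b.indicator g | mc] =ᵐ[μ] μ⟦s ∩ b | mc⟧ := by
        have hbg : b.indicator g = g * (b.indicator fun _ => (1:ℝ)) := by
          funext ω; by_cases hω : ω ∈ b <;> simp [Set.indicator_apply, hω]
        rw [hbg]
        refine (condExp_mul_of_stronglyMeasurable_left stronglyMeasurable_condExp ?_ (intInd hbM)).trans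
          (h s b hs hb).symm
        rw [← hbg]; exact h1
      rw [setIntegral_congr_ae hcM (h2.mono fun x hx _ => hx)]
      rw [setIntegral_condExp hmc (intInd (hsM.inter hbM)) hc]
      have h3 : b.indicator (s.indicator fun _ => (1:ℝ)) = (s ∩ b).indicator fun _ => (1:ℝ) := by
        rw [Set.indicator_indicator, Set.inter_comm]
      rw [h3]
    · intro A hAm hA
      have hAM : MeasurableSet A := hsuple _ hAm
      have e1 : ∫ x in A, g x ∂μ + ∫ x in Aᶜ, g x ∂μ = ∫ x, g x ∂μ :=
        integral_add_compl hAM integrable_condExp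
      have e2 : ∫ x in A, (s.indicator fun _ => (1:ℝ)) x ∂μ
          + ∫ x in Aᶜ, (s.indicator fun _ => (1:ℝ)) x ∂μ
          = ∫ x, (s.indicator fun _ => (1:ℝ)) x ∂μ :=
        integral_add_compl hAM (intInd hsM)
      have e3 : ∫ x, g x ∂μ = ∫ x, (s.indicator fun _ => (1:ℝ)) x ∂μ := integral_condExp hmc
      linarith
    · intro f hdisj hfm hf
      have hfM : ∀ n, MeasurableSet (f n) := fun n => hsuple _ (hfm n)
      rw [integral_iUnion hfM hdisj integrable_condExp.integrableOn,
        integral_iUnion hfM hdisj (intInd hsM).integrableOn]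
      exact tsum_congr hf
  · intro h s t hs ht
    have hsM : MeasurableSet s := hma _ hs
    have htM : MeasurableSet t := hmb _ ht
    have hind : ((s ∩ t).indicator fun _ => (1:ℝ))
        = (t.indicator fun _ => (1:ℝ)) * (s.indicator fun _ => (1:ℝ)) := by
      funext ω; by_cases h1 : ω ∈ s <;> by_cases h2 : ω ∈ t <;>
        simp [Set.indicator_apply, h1, h2]
    calc μ⟦s ∩ t | mc⟧
        =ᵐ[μ] μ[ (μ⟦s ∩ t | mc ⊔ mb⟧) | mc] := (condExp_condExp_of_le le_sup_left hsuple).symm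
      _ =ᵐ[μ] μ[ (fun ω => (t.indicator fun _ => (1:ℝ)) ω * (μ⟦s | mc⟧) ω) | mc] := by
          refine condExp_congr_ae ?_
          rw [hind]
          have hsm : StronglyMeasurable[mc ⊔ mb] (t.indicator fun _ : Ω => (1:ℝ)) :=
            StronglyMeasurable.mono
              ((stronglyMeasurable_const : StronglyMeasurable[mb] fun _ : Ω => (1:ℝ)).indicator ht)
              (le_sup_right : mb ≤ mc ⊔ mb)
          refine (condExp_mul_of_stronglyMeasurable_left hsm ?_ (intInd hsM)).trans ?_
          · rw [← hind]; exact intInd (hsM.inter htM)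
          · exact Filter.EventuallyEq.mul Filter.EventuallyEq.rfl (h s hs)
      _ =ᵐ[μ] (μ⟦s | mc⟧) * (μ⟦t | mc⟧) := by
          have : (fun ω => (t.indicator fun _ => (1:ℝ)) ω * (μ⟦s | mc⟧) ω)
              = (μ⟦s | mc⟧) * (t.indicator fun _ => (1:ℝ)) := by
            funext ω; exact mul_comm _ _
          rw [this]
          refine (condExp_mul_of_stronglyMeasurable_left stronglyMeasurable_condExp ?_ (intInd htM))
          have : (μ⟦s | mc⟧) * (t.indicator fun _ => (1:ℝ)) = t.indicator (μ⟦s | mc⟧) := by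
            funext ω; by_cases hω : ω ∈ t <;> simp [Set.indicator_apply, hω]
          rw [this]
          exact integrable_condExp.indicator htM


lemma CIA.weak_union (hmc : mc ≤ mΩ) (hma : ma ≤ mΩ) (hmb : mb ≤ mΩ) (hmd : md ≤ mΩ)
    (h : CIA μ mc ma (mb ⊔ md)) : CIA μ (mc ⊔ md) ma mb := by
  have h2 := h.mono_right (le_sup_right : md ≤ mb ⊔ md)
  rw [cia_iff_condexp hmc hma (sup_le hmb hmd)] at h
  rw [cia_iff_condexp hmc hma hmd] at h2
  rw [cia_iff_condexp (sup_le hmc hmd) hma hmb]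
  intro s hs
  have e : mc ⊔ md ⊔ mb = mc ⊔ (mb ⊔ md) := by
    rw [sup_assoc, sup_comm md mb]
  rw [e]
  exact (h s hs).trans (h2 s hs).symm

lemma CIA.contraction (hmc : mc ≤ mΩ) (hma : ma ≤ mΩ) (hmb : mb ≤ mΩ) (hmd : md ≤ mΩ)
    (h1 : CIA μ mc ma md) (h2 : CIA μ (mc ⊔ md) ma mb) : CIA μ mc ma (mb ⊔ md) := by
  rw [cia_iff_condexp hmc hma hmd] at h1
  rw [cia_iff_condexp (sup_le hmc hmd) hma hmb] at h2
  rw [cia_iff_condexp hmc hma (sup_le hmb hmd)]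
  intro s hs
  have e : mc ⊔ (mb ⊔ md) = mc ⊔ md ⊔ mb := by
    rw [sup_assoc, sup_comm md mb]
  rw [e]
  exact (h2 s hs).trans (h1 s hs)

section Map

variable {Λ : Type*} {m m_c m_a m_b : MeasurableSpace Λ} [mΛ : MeasurableSpace Λ]

lemma condexp_comp_map (hm : m ≤ mΛ) {T : Ω → Λ} (hT : Measurable T) {g : Λ → ℝ}
    (hgm : AEStronglyMeasurable g (μ.map T)) (hgi : Integrable g (μ.map T)) :
    (fun ω => ((μ.map T)[g | m]) (T ω)) =ᵐ[μ] μ[(fun ω => g (T ω)) | m.comap T] := by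
  have hcle : m.comap T ≤ mΩ :=
    le_trans (MeasurableSpace.comap_mono hm) (measurable_iff_comap_le.mp hT)
  haveI : SigmaFinite (μ.trim hcle) := (isFiniteMeasure_trim hcle).toSigmaFinite
  haveI : SigmaFinite ((μ.map T).trim hm) := (isFiniteMeasure_trim hm).toSigmaFinite
  have hTc : @Measurable Ω Λ (m.comap T) m T := fun s hs => ⟨s, hs, rfl⟩
  have hf : Integrable (fun ω => g (T ω)) μ := (integrable_map_measure hgm hT.aemeasurable).mp hgi
  have hcm : AEStronglyMeasurable ((μ.map T)[g | m]) (μ.map T) :=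
    (stronglyMeasurable_condExp.mono hm).aestronglyMeasurable
  refine ae_eq_condExp_of_forall_setIntegral_eq hcle hf ?_ ?_ ?_
  · intro A _ _
    refine Integrable.integrableOn ?_
    exact (integrable_map_measure hcm hT.aemeasurable).mp integrable_condExp
  · rintro A ⟨B, hB, rfl⟩ _
    have hBM : MeasurableSet B := hm _ hB
    have e1 := setIntegral_map hBM hcm hT.aemeasurable
    have e2 := setIntegral_map hBM hgm hT.aemeasurable
    calc ∫ x in T ⁻¹' B, ((μ.map T)[g | m]) (T x) ∂μ
        = ∫ y in B, ((μ.map T)[g | m]) y ∂(μ.map T) := e1.symm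
      _ = ∫ y in B, g y ∂(μ.map T) := setIntegral_condExp hm hgi hB
      _ = ∫ x in T ⁻¹' B, g (T x) ∂μ := e2
  · exact (stronglyMeasurable_condExp.comp_measurable hTc).aestronglyMeasurable

lemma cia_map (hc : m_c ≤ mΛ) (ha : m_a ≤ mΛ) (hb : m_b ≤ mΛ) {T : Ω → Λ} (hT : Measurable T) :
    CIA μ (m_c.comap T) (m_a.comap T) (m_b.comap T) ↔ CIA (μ.map T) m_c m_a m_b := by
  have key : ∀ (F G : Λ → ℝ), StronglyMeasurable F → StronglyMeasurable G →
      (((fun ω => F (T ω)) =ᵐ[μ] fun ω => G (T ω)) ↔ F =ᵐ[μ.map T] G) := by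
    intro F G hF hG
    exact (ae_map_iff hT.aemeasurable (hF.measurableSet_eq_fun hG)).symm
  have hindm : ∀ (u : Set Λ), MeasurableSet u →
      StronglyMeasurable ((μ.map T)⟦u | m_c⟧) := fun u _ => stronglyMeasurable_condExp.mono hc
  have cexp : ∀ (u : Set Λ), MeasurableSet u →
      (μ⟦T ⁻¹' u | m_c.comap T⟧) =ᵐ[μ] fun ω => ((μ.map T)⟦u | m_c⟧) (T ω) := by
    intro u hu
    have hind : AEStronglyMeasurable (u.indicator fun _ => (1:ℝ)) (μ.map T) :=
      ((stronglyMeasurable_const.indicator hu)).aestronglyMeasurable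
    have := condexp_comp_map (μ := μ) hc hT hind (intInd hu)
    refine Filter.EventuallyEq.trans ?_ this.symm
    have : (T ⁻¹' u).indicator (fun _ => (1:ℝ)) = fun ω => u.indicator (fun _ => (1:ℝ)) (T ω) := by
      funext ω; by_cases hω : T ω ∈ u <;> simp [Set.indicator_apply, hω]
    rw [this]
  constructor
  · intro h s t hs ht
    have hsM : MeasurableSet s := ha _ hs
    have htM : MeasurableSet t := hb _ ht
    have h0 := h (T ⁻¹' s) (T ⁻¹' t) ⟨s, hs, rfl⟩ ⟨t, ht, rfl⟩
    rw [← Set.preimage_inter] at h0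
    have e1 := cexp (s ∩ t) (hsM.inter htM)
    have e2 := cexp s hsM
    have e3 := cexp t htM
    refine (key _ _ (hindm _ (hsM.inter htM)) ((hindm _ hsM).mul (hindm _ htM))).mp ?_
    refine Filter.EventuallyEq.trans e1.symm (h0.trans ?_)
    exact Filter.EventuallyEq.mul e2 e3
  · rintro h s' t' ⟨s, hs, rfl⟩ ⟨t, ht, rfl⟩
    have hsM : MeasurableSet s := ha _ hs
    have htM : MeasurableSet t := hb _ ht
    have h0 := h s t hs ht
    rw [← Set.preimage_inter]
    have e1 := cexp (s ∩ t) (hsM.inter htM)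
    have e2 := cexp s hsM
    have e3 := cexp t htM
    refine e1.trans (Filter.EventuallyEq.trans ?_ (Filter.EventuallyEq.mul e2 e3).symm)
    exact (key _ _ (hindm _ (hsM.inter htM)) ((hindm _ hsM).mul (hindm _ htM))).mpr h0

end Map


end Abstract

section Concrete


variable {V : Type*} {Ω : Type*} [mΩ : MeasurableSpace Ω] [StandardBorelSpace Ω] [Nonempty Ω]
  {E : V → Type*} [∀ i, MeasurableSpace (E i)]
  (μ : Measure Ω) [IsFiniteMeasure μ] (X : ∀ i, Ω → E i) (hX : ∀ i, Measurable (X i))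

lemma mset_eq (S : Set V) :
    MeasurableSpace.comap (fun ω => fun v : S => X v.1 ω) inferInstance
      = ⨆ v ∈ S, MeasurableSpace.comap (X v) inferInstance := by
  have : (inferInstance : MeasurableSpace (∀ v : S, E v.1))
      = ⨆ a : S, MeasurableSpace.comap (fun f : (∀ v : S, E v.1) => f a) inferInstance := rfl
  rw [this, MeasurableSpace.comap_iSup]
  rw [show (⨆ a : S, (MeasurableSpace.comap (fun f : (∀ v : S, E v.1) => f a)
        inferInstance).comap (fun ω => fun v : S => X v.1 ω))
      = ⨆ a : S, MeasurableSpace.comap (X a.1) inferInstance from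
    iSup_congr fun a => MeasurableSpace.comap_comp]
  exact iSup_subtype

include hX in
lemma msup_le (S : Set V) :
    (⨆ v ∈ S, MeasurableSpace.comap (X v) inferInstance) ≤ mΩ :=
  iSup₂_le fun v _ => (hX v).comap_le

lemma ci_iff_cia (A B C : Set V) :
    CI μ X hX A B C ↔ CIA μ
      (⨆ v ∈ C, MeasurableSpace.comap (X v) inferInstance)
      (⨆ v ∈ A, MeasurableSpace.comap (X v) inferInstance)
      (⨆ v ∈ B, MeasurableSpace.comap (X v) inferInstance) := by
  rw [CI, condIndepFun_iff_condIndep,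
    condIndep_iff _ _ _ _ ((measurable_pi_iff.mpr fun k : A => hX k.1).comap_le)
      ((measurable_pi_iff.mpr fun k : B => hX k.1).comap_le),
    mset_eq X A, mset_eq X B, mset_eq X C]
  exact Iff.rfl


end Concrete

section Exchange

variable {V : Type*} {Ω : Type*} [mΩ : MeasurableSpace Ω] [StandardBorelSpace Ω] [Nonempty Ω]
  {E : Type*} [mE : MeasurableSpace E]
  (μ : Measure Ω) [IsFiniteMeasure μ] (X : V → Ω → E) (hX : ∀ i, Measurable (X i))

set_option maxHeartbeats 1000000 in
lemma cia_congr {Ω' : Type*} {mc ma mb : MeasurableSpace Ω'} [MeasurableSpace Ω']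
    {μ' ν' : Measure Ω'} [IsFiniteMeasure μ'] [IsFiniteMeasure ν'] (h : μ' = ν') :
    CIA μ' mc ma mb ↔ CIA ν' mc ma mb := by
  subst h
  exact ⟨fun h => h, fun h => h⟩

set_option maxHeartbeats 1000000 in
include hX in
lemma ci_exchange (σ : Equiv.Perm V)
    (hσ : μ.map (fun ω => fun v : V => X (σ v) ω) = μ.map (fun ω => fun v : V => X v ω))
    (A B C : Set V) :
    CI μ X hX A B C ↔ CI μ X hX (σ '' A) (σ '' B) (σ '' C) := by
  have hT : Measurable (fun ω => fun v : V => X v ω) := measurable_pi_lambda _ hX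
  have hTσ : Measurable (fun ω => fun v : V => X (σ v) ω) :=
    measurable_pi_lambda _ (fun v => hX (σ v))
  set N : Set V → MeasurableSpace (V → E) :=
    fun S => ⨆ v ∈ S, mE.comap (fun f : V → E => f v) with hN
  have hNle : ∀ S, N S ≤ MeasurableSpace.pi :=
    fun S => iSup₂_le fun v _ => (measurable_pi_apply v).comap_le
  have hcomapT : ∀ S : Set V, (N S).comap (fun ω => fun v : V => X v ω)
      = ⨆ v ∈ S, mE.comap (X v) := by
    intro S
    rw [hN, MeasurableSpace.comap_iSup]
    refine iSup_congr fun v => ?_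
    rw [MeasurableSpace.comap_iSup]
    exact iSup_congr fun _ => MeasurableSpace.comap_comp
  have hcomapTσ : ∀ S : Set V, (N S).comap (fun ω => fun v : V => X (σ v) ω)
      = ⨆ v ∈ σ '' S, mE.comap (X v) := by
    intro S
    rw [hN, MeasurableSpace.comap_iSup]
    rw [show (⨆ v, (⨆ (_ : v ∈ S), mE.comap (fun f : V → E => f v)).comap
          (fun ω => fun v : V => X (σ v) ω))
        = ⨆ v ∈ S, mE.comap (X (σ v)) from iSup_congr fun v => by
      rw [MeasurableSpace.comap_iSup]; exact iSup_congr fun _ => MeasurableSpace.comap_comp]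
    exact (iSup_image (t := S) (f := fun v => σ v)
      (g := fun v => mE.comap (X v))).symm
  calc CI μ X hX A B C
      ↔ CIA μ (⨆ v ∈ C, mE.comap (X v)) (⨆ v ∈ A, mE.comap (X v))
          (⨆ v ∈ B, mE.comap (X v)) := ci_iff_cia μ X hX A B C
    _ ↔ CIA (μ.map (fun ω => fun v : V => X v ω)) (N C) (N A) (N B) := by
        rw [← hcomapT A, ← hcomapT B, ← hcomapT C]
        exact cia_map (hNle C) (hNle A) (hNle B) hT
    _ ↔ CIA (μ.map (fun ω => fun v : V => X (σ v) ω)) (N C) (N A) (N B) :=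
        cia_congr hσ.symm
    _ ↔ CIA μ (⨆ v ∈ σ '' C, mE.comap (X v)) (⨆ v ∈ σ '' A, mE.comap (X v))
          (⨆ v ∈ σ '' B, mE.comap (X v)) := by
        rw [← hcomapTσ A, ← hcomapTσ B, ← hcomapTσ C]
        exact (cia_map (hNle C) (hNle A) (hNle B) hTσ).symm
    _ ↔ CI μ X hX (σ '' A) (σ '' B) (σ '' C) := (ci_iff_cia μ X hX _ _ _).symm

end Exchange

end StmtAux


variable {V : Type*} [Fintype V] {Ω : Type*} [MeasurableSpace Ω] [StandardBorelSpace Ω]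
  [Nonempty Ω] {E : Type*} [MeasurableSpace E] [StandardBorelSpace E] [Nonempty E]
  (μ : MeasureTheory.Measure Ω) [MeasureTheory.IsProbabilityMeasure μ]
  (X : V → Ω → E) (hX : ∀ i, Measurable (X i))

/-- If the joint distribution of `(X i)_{i ∈ V}` is exchangeable, then `P` satisfies the
composition property iff `P` satisfies upward stability. -/
theorem stmt_6
    (hexch : ∀ σ : Equiv.Perm V,
      μ.map (fun ω => fun i : V => X (σ i) ω) = μ.map (fun ω => fun i : V => X i ω)) :
    (∀ i j k : V, i ≠ j → i ≠ k → j ≠ k → ∀ C : Set V, C ⊆ ({i, j, k} : Set V)ᶜ →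
        CI μ X hX {i} {j} C → CI μ X hX {i} {k} C → CI μ X hX {i} {j, k} C) ↔
      (∀ i j k : V, i ≠ j → i ≠ k → j ≠ k → ∀ C : Set V, C ⊆ ({i, j, k} : Set V)ᶜ →
        CI μ X hX {i} {j} C → CI μ X hX {i} {j} (C ∪ {k})) := by
  classical
  have msup : ∀ S : Set V, (⨆ v ∈ S, MeasurableSpace.comap (X v) inferInstance) ≤
      (inferInstance : MeasurableSpace Ω) := fun S => StmtAux.msup_le X hX S
  have epair : ∀ j k : V, (⨆ v ∈ ({j, k} : Set V), MeasurableSpace.comap (X v) inferInstance)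
      = (⨆ v ∈ ({j} : Set V), MeasurableSpace.comap (X v) inferInstance)
        ⊔ (⨆ v ∈ ({k} : Set V), MeasurableSpace.comap (X v) inferInstance) := by
    intro j k
    rw [show ({j, k} : Set V) = {j} ∪ {k} from by rw [Set.singleton_union], iSup_union]
  have eunion : ∀ (C : Set V) (k : V),
      (⨆ v ∈ (C ∪ {k} : Set V), MeasurableSpace.comap (X v) inferInstance)
      = (⨆ v ∈ C, MeasurableSpace.comap (X v) inferInstance)
        ⊔ (⨆ v ∈ ({k} : Set V), MeasurableSpace.comap (X v) inferInstance) := by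
    intro C k
    rw [iSup_union]
  constructor
  · intro hcomp i j k hij hik hjk C hC hijC
    have hjC : j ∉ C := fun hj => (hC hj) (by simp)
    have hkC : k ∉ C := fun hk => (hC hk) (by simp)
    set σ : Equiv.Perm V := Equiv.swap j k with hσdef
    have himg : σ '' C = C := by
      have h1 : ∀ v ∈ C, σ v = v := fun v hv =>
        Equiv.swap_apply_of_ne_of_ne (fun h => hjC (h ▸ hv)) (fun h => hkC (h ▸ hv))
      rw [Set.image_congr h1]; exact Set.image_id C
    have hikC : CI μ X hX {i} {k} C := by
      have h2 := (StmtAux.ci_exchange μ X hX σ (hexch σ) {i} {j} C).mp hijC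
      rwa [Set.image_singleton, Set.image_singleton, hσdef, Equiv.swap_apply_left,
        Equiv.swap_apply_of_ne_of_ne hij hik, himg] at h2
    have hcomp' := hcomp i j k hij hik hjk C hC hijC hikC
    rw [StmtAux.ci_iff_cia] at hcomp' ⊢
    rw [epair j k] at hcomp'
    rw [eunion C k]
    exact StmtAux.CIA.weak_union (msup C) (msup {i}) (msup {j}) (msup {k}) hcomp'
  · intro hus i j k hij hik hjk C hC hijC hikC
    have h1 := hus i j k hij hik hjk C hC hijC
    rw [StmtAux.ci_iff_cia] at h1 hikC ⊢
    rw [eunion C k] at h1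
    rw [epair j k]
    exact StmtAux.CIA.contraction (msup C) (msup {i}) (msup {j}) (msup {k}) hikC h1
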